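/- Let k ≥ 1 and ℓ ≥ 0 be integers. A hypergraph G = (V,E) is (k,ℓ)-sparse if and only if G has a (k,ℓ)-pebble game construction, i.e., there is a reachable configuration (E', t, peb) of the (k,ℓ)-pebble game on V whose underlying edge multiset E' equals E. -/
import Mathlib


/-- The number of edges of the multiset `E` spanned by the vertex set `W`. -/
def spanCount {V : Type*} [DecidableEq V] (E : Multiset (Finset V)) (W : Finset V) : ℕ :=
  (E.filter fun e => e ⊆ W).card

/-- A hypergraph with edge multiset `E` is `(k,ℓ)`-sparse if every vertex subset spanning
at least one edge spans at most `k|W| - ℓ` edges. -/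
def Sparse {V : Type*} [DecidableEq V] (k l : ℕ) (E : Multiset (Finset V)) : Prop :=
  ∀ W : Finset V, 1 ≤ spanCount E W → spanCount E W + l ≤ k * W.card

/-- Reachable configurations of the `(k,ℓ)`-pebble game on the vertex type `V`.
A configuration is a multiset `D` of oriented edges (an edge together with its tail)
and a pebble function `peb`.  The initial configuration has no edges and `k` pebbles on
each vertex.  The moves are the add-edge move (an edge with at least `ℓ+1` pebbles on its
ends may be added, picking up a pebble from its chosen tail) and the pebble-shift move
(a pebble on an end `v` of an edge with tail `w` may be moved to `w`, making `v` the new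
tail). -/
inductive PebbleReach {V : Type*} [DecidableEq V] (k l : ℕ) :
    Multiset (Finset V × V) → (V → ℕ) → Prop
  | init : PebbleReach k l 0 (fun _ => k)
  | addEdge {D : Multiset (Finset V × V)} {peb : V → ℕ} (e : Finset V) (v : V) :
      PebbleReach k l D peb → e.Nonempty → v ∈ e →
      l + 1 ≤ ∑ u ∈ e, peb u → 1 ≤ peb v →
      PebbleReach k l ((e, v) ::ₘ D) (Function.update peb v (peb v - 1))
  | shift {D : Multiset (Finset V × V)} {peb : V → ℕ} (e : Finset V) (w v : V) :
      PebbleReach k l D peb → (e, w) ∈ D → v ∈ e → 1 ≤ peb v →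
      PebbleReach k l ((e, v) ::ₘ D.erase (e, w))
        (Function.update (Function.update peb v (peb v - 1)) w
          (Function.update peb v (peb v - 1) w + 1))

namespace PebbleAux

variable {V : Type*} [DecidableEq V] {k l : ℕ}

/-- general countP comparison lemma -/
lemma countP_le_mem {α : Type*} {p q : α → Prop} [DecidablePred p] [DecidablePred q] :
    ∀ {s : Multiset α}, (∀ a ∈ s, p a → q a) →
      Multiset.countP p s ≤ Multiset.countP q s := by
  intro s
  induction s using Multiset.induction_on with
  | empty => intro _; simp
  | cons a t IH =>
    intro h
    rw [Multiset.countP_cons, Multiset.countP_cons]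
    have h1 := h a (Multiset.mem_cons_self a t)
    have h2 := IH (fun b hb => h b (Multiset.mem_cons_of_mem hb))
    split_ifs with hp hq hq
    · omega
    · exact absurd (h1 hp) hq
    · omega
    · omega

lemma countP_congr_mem {α : Type*} {p q : α → Prop} [DecidablePred p] [DecidablePred q] :
    ∀ {s : Multiset α}, (∀ a ∈ s, p a ↔ q a) →
      Multiset.countP p s = Multiset.countP q s := by
  intro s h
  exact le_antisymm (countP_le_mem (fun a ha => (h a ha).1))
    (countP_le_mem (fun a ha => (h a ha).2))

lemma tail_mem {D : Multiset (Finset V × V)} {peb : V → ℕ}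
    (h : PebbleReach k l D peb) : ∀ p ∈ D, p.2 ∈ p.1 := by
  induction h with
  | init => simp
  | addEdge e v h hne hv hsum hp IH =>
    intro p hp'
    rcases Multiset.mem_cons.1 hp' with rfl | hp'
    · exact hv
    · exact IH _ hp'
  | shift e w v h hmem hv hp IH =>
    intro p hp'
    rcases Multiset.mem_cons.1 hp' with rfl | hp'
    · exact hv
    · exact IH _ (Multiset.mem_of_mem_erase hp')

lemma degree {D : Multiset (Finset V × V)} {peb : V → ℕ}
    (h : PebbleReach k l D peb) (u : V) :
    peb u + Multiset.countP (fun p => p.2 = u) D = k := by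
  induction h with
  | init => simp
  | @addEdge D' peb' e v h hne hv hsum hp IH =>
    rw [Multiset.countP_cons]
    by_cases huv : u = v
    · subst huv
      rw [Function.update_self, if_pos rfl]
      omega
    · have hcond : ¬((e, v).2 = u) := fun hh => huv hh.symm
      rw [Function.update_of_ne huv, if_neg hcond]
      omega
  | @shift D' peb' e w v h hmem hv hp IH =>
    have IH' : peb' u + (Multiset.countP (fun p => p.2 = u) (D'.erase (e, w)) +
        if (e, w).2 = u then 1 else 0) = k := by
      rw [← Multiset.countP_cons, Multiset.cons_erase hmem]; exact IH
    rw [Multiset.countP_cons]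
    by_cases huw : u = w
    · subst huw
      rw [if_pos rfl] at IH'
      rw [Function.update_self]
      by_cases huv : u = v
      · subst huv
        rw [Function.update_self, if_pos rfl]
        omega
      · have hcond : ¬((e, v).2 = u) := fun hh => huv hh.symm
        rw [Function.update_of_ne huv, if_neg hcond]
        omega
    · have hcondw : ¬((e, w).2 = u) := fun hh => huw hh.symm
      rw [if_neg hcondw] at IH'
      rw [Function.update_of_ne huw]
      by_cases huv : u = v
      · subst huv
        rw [Function.update_self, if_pos rfl]
        omega
      · have hcond : ¬((e, v).2 = u) := fun hh => huv hh.symm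
        rw [Function.update_of_ne huv, if_neg hcond]
        omega

lemma countP_tail_sum (D : Multiset (Finset V × V)) (W : Finset V) :
    ∑ u ∈ W, Multiset.countP (fun p => p.2 = u) D
      = Multiset.countP (fun p => p.2 ∈ W) D := by
  induction D using Multiset.induction_on with
  | empty => simp
  | cons a s IH =>
    simp only [Multiset.countP_cons, Finset.sum_add_distrib, IH]
    congr 1
    exact Finset.sum_ite_eq W a.2 (fun _ => 1)

lemma sum_peb {D : Multiset (Finset V × V)} {peb : V → ℕ}
    (h : PebbleReach k l D peb) (W : Finset V) :
    ∑ u ∈ W, peb u + Multiset.countP (fun p => p.2 ∈ W) D = k * W.card := by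
  rw [← countP_tail_sum, ← Finset.sum_add_distrib]
  have : ∀ u ∈ W, peb u + Multiset.countP (fun p => p.2 = u) D = k :=
    fun u _ => degree h u
  rw [Finset.sum_congr rfl this, Finset.sum_const, smul_eq_mul, mul_comm]

lemma reach_sparse {D : Multiset (Finset V × V)} {peb : V → ℕ}
    (h : PebbleReach k l D peb) :
    ∀ W : Finset V, 1 ≤ Multiset.countP (fun p => p.1 ⊆ W) D →
      Multiset.countP (fun p => p.1 ⊆ W) D + l ≤ k * W.card := by
  induction h with
  | init => intro W hW; simp at hW
  | @addEdge D' peb' e v h hne hv hsum hp IH =>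
    intro W hW
    rw [Multiset.countP_cons] at hW ⊢
    by_cases he : e ⊆ W
    · have h1 := sum_peb h W
      have h2 : Multiset.countP (fun p => p.1 ⊆ W) D'
          ≤ Multiset.countP (fun p => p.2 ∈ W) D' :=
        countP_le_mem (fun p hp' hsub => hsub (tail_mem h p hp'))
      have h3 : l + 1 ≤ ∑ u ∈ W, peb' u :=
        le_trans hsum (Finset.sum_le_sum_of_subset he)
      have hcond : ((e, v).1 ⊆ W) := he
      rw [if_pos hcond]
      set K := k * W.card with hK
      omega
    · have hcond : ¬((e, v).1 ⊆ W) := he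
      rw [if_neg hcond] at hW ⊢
      exact IH W (by omega)
  | @shift D' peb' e w v h hmem hv hp IH =>
    intro W hW
    have key : Multiset.countP (fun p => p.1 ⊆ W) ((e, v) ::ₘ D'.erase (e, w))
        = Multiset.countP (fun p => p.1 ⊆ W) D' := by
      have h1 : Multiset.countP (fun p => p.1 ⊆ W) D'
          = Multiset.countP (fun p => p.1 ⊆ W) (D'.erase (e, w)) +
            if (e, w).1 ⊆ W then 1 else 0 := by
        conv_lhs => rw [← Multiset.cons_erase hmem]
        rw [Multiset.countP_cons]
      rw [Multiset.countP_cons, h1]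
    rw [key] at hW ⊢
    exact IH W hW

/-- `reachN D S n v`: a pebble at `v` can be routed to `S` in at most `n` steps. -/
def reachN (D : Multiset (Finset V × V)) (S : Finset V) : ℕ → V → Prop
  | 0, v => v ∈ S
  | n + 1, v => v ∈ S ∨ ∃ p ∈ D, v ∈ p.1 ∧ reachN D S n p.2

lemma reachN_zero_iff {D : Multiset (Finset V × V)} {S : Finset V} {v : V} :
    reachN D S 0 v ↔ v ∈ S := Iff.rfl

lemma reachN_succ_iff {D : Multiset (Finset V × V)} {S : Finset V} {n : ℕ} {v : V} :
    reachN D S (n + 1) v ↔ v ∈ S ∨ ∃ p ∈ D, v ∈ p.1 ∧ reachN D S n p.2 := Iff.rfl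

lemma reachN_mono_set {D D' : Multiset (Finset V × V)} {S : Finset V}
    (hsub : ∀ p ∈ D, p ∈ D') : ∀ {n : ℕ} {v : V}, reachN D S n v → reachN D' S n v := by
  intro n
  induction n with
  | zero => intro v h; exact h
  | succ n IH =>
    intro v h
    rcases h with h | ⟨p, hp, hvp, hr⟩
    · exact Or.inl h
    · exact Or.inr ⟨p, hsub p hp, hvp, IH hr⟩

lemma reachN_erase {D : Multiset (Finset V × V)} {S : Finset V} (e : Finset V) (w : V) :
    ∀ n : ℕ, (∀ j, reachN D S j w → n ≤ j) →
      ∀ v : V, reachN D S n v → reachN (D.erase (e, w)) S n v := by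
  intro n
  induction n with
  | zero => intro _ v h; exact h
  | succ n IH =>
    intro hmin v h
    rcases h with h | ⟨p, hp, hvp, hr⟩
    · exact Or.inl h
    · by_cases hpe : p = (e, w)
      · exfalso
        subst hpe
        exact absurd (hmin n hr) (by omega)
      · exact Or.inr ⟨p, (Multiset.mem_erase_of_ne hpe).2 hp, hvp,
          IH (fun j hj => Nat.le_of_succ_le (hmin j hj)) p.2 hr⟩

lemma gather1 : ∀ n : ℕ, ∀ (D : Multiset (Finset V × V)) (peb : V → ℕ),
    PebbleReach k l D peb → ∀ (S : Finset V) (v : V),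
    reachN D S n v → v ∉ S → 1 ≤ peb v →
    ∃ (D' : Multiset (Finset V × V)) (peb' : V → ℕ),
      PebbleReach k l D' peb' ∧ D'.map Prod.fst = D.map Prod.fst ∧
      ∑ u ∈ S, peb' u = (∑ u ∈ S, peb u) + 1 := by
  intro n
  induction n using Nat.strong_induction_on with
  | _ n IH =>
  intro D peb hreach S v hv hvS hpv
  classical
  have hex : ∃ m, reachN D S m v := ⟨n, hv⟩
  have hd : reachN D S (Nat.find hex) v := Nat.find_spec hex
  have hdle : Nat.find hex ≤ n := Nat.find_min' hex hv
  have hdpos : Nat.find hex ≠ 0 := by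
    intro h0
    rw [h0] at hd
    exact hvS hd
  obtain ⟨m, hm⟩ : ∃ m, Nat.find hex = m + 1 := ⟨Nat.find hex - 1, by omega⟩
  rw [hm] at hd
  rcases hd with h | ⟨p, hp, hvp, hrw⟩
  · exact absurd h hvS
  obtain ⟨e, w⟩ := p
  have hvw : v ≠ w := by
    rintro rfl
    have : Nat.find hex ≤ m := Nat.find_min' hex hrw
    omega
  have hexw : ∃ j, reachN D S j w := ⟨m, hrw⟩
  have hdww : reachN D S (Nat.find hexw) w := Nat.find_spec hexw
  have hdwm : Nat.find hexw ≤ m := Nat.find_min' hexw hrw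
  have her : reachN (D.erase (e, w)) S (Nat.find hexw) w :=
    reachN_erase e w _ (fun j hj => Nat.find_min' hexw hj) w hdww
  have hw1 : reachN ((e, v) ::ₘ D.erase (e, w)) S (Nat.find hexw) w :=
    reachN_mono_set (fun q hq => Multiset.mem_cons_of_mem hq) her
  have hreach1 := PebbleReach.shift e w v hreach hp hvp hpv
  set peb1 := Function.update (Function.update peb v (peb v - 1)) w
      (Function.update peb v (peb v - 1) w + 1) with hpeb1
  have hA : Function.update peb v (peb v - 1) w = peb w :=
    Function.update_of_ne (Ne.symm hvw) _ _
  have hpeb1w : peb1 w = peb w + 1 := by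
    rw [hpeb1, Function.update_self, hA]
  have hpeb1u : ∀ u, u ≠ v → u ≠ w → peb1 u = peb u := by
    intro u h1 h2
    rw [hpeb1, Function.update_of_ne h2, Function.update_of_ne h1]
  have hfst1 : (((e, v) ::ₘ D.erase (e, w)).map Prod.fst) = D.map Prod.fst := by
    conv_rhs => rw [← Multiset.cons_erase hp]
    simp
  by_cases hwS : w ∈ S
  · refine ⟨_, peb1, hreach1, hfst1, ?_⟩
    rw [← Finset.add_sum_erase _ peb1 hwS, ← Finset.add_sum_erase _ peb hwS]
    have hcong : ∀ u ∈ S.erase w, peb1 u = peb u := fun u hu =>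
      hpeb1u u (fun h => hvS (h ▸ Finset.mem_of_mem_erase hu)) (Finset.ne_of_mem_erase hu)
    have hsum2 : ∑ u ∈ S.erase w, peb1 u = ∑ u ∈ S.erase w, peb u :=
      Finset.sum_congr rfl hcong
    rw [hsum2, hpeb1w]
    omega
  · have hdwn : Nat.find hexw < n := by omega
    have hpw1 : 1 ≤ peb1 w := by rw [hpeb1w]; omega
    obtain ⟨D', peb', hr', hf', hs'⟩ :=
      IH (Nat.find hexw) hdwn _ peb1 hreach1 S w hw1 hwS hpw1
    refine ⟨D', peb', hr', by rw [hf', hfst1], ?_⟩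
    rw [hs']
    have hcong : ∀ u ∈ S, peb1 u = peb u := fun u hu =>
      hpeb1u u (fun h => hvS (h ▸ hu)) (fun h => hwS (h ▸ hu))
    have hsum2 : ∑ u ∈ S, peb1 u = ∑ u ∈ S, peb u :=
      Finset.sum_congr rfl hcong
    rw [hsum2]

/-- The set of vertices from which a pebble can be routed to `S`. -/
noncomputable def RSet (D : Multiset (Finset V × V)) (S : Finset V) : Finset V :=
  @Finset.filter _ (fun v => ∃ n, reachN D S n v) (Classical.decPred _)
    (S ∪ D.toFinset.sup fun p => p.1)

lemma mem_RSet {D : Multiset (Finset V × V)} {S : Finset V} {v : V} :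
    v ∈ RSet D S ↔
      v ∈ (S ∪ D.toFinset.sup fun p => p.1) ∧ ∃ n, reachN D S n v :=
  @Finset.mem_filter _ _ (Classical.decPred _) _ _

lemma subset_RSet {D : Multiset (Finset V × V)} {S : Finset V} : S ⊆ RSet D S := by
  intro v hv
  exact mem_RSet.2 ⟨Finset.mem_union_left _ hv, ⟨0, hv⟩⟩

lemma RSet_reach {D : Multiset (Finset V × V)} {S : Finset V} {v : V}
    (h : v ∈ RSet D S) : ∃ n, reachN D S n v := (mem_RSet.1 h).2

lemma RSet_closed {D : Multiset (Finset V × V)} {S : Finset V} {p : Finset V × V}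
    (hp : p ∈ D) (ht : p.2 ∈ RSet D S) : p.1 ⊆ RSet D S := by
  intro x hx
  obtain ⟨n, hn⟩ := RSet_reach ht
  refine mem_RSet.2 ⟨?_, ⟨n + 1, Or.inr ⟨p, hp, hx, hn⟩⟩⟩
  exact Finset.mem_union_right _
    ((Finset.le_sup (f := fun p : Finset V × V => p.1) (Multiset.mem_toFinset.2 hp)) hx)

lemma gatherMany (E : Multiset (Finset V)) (hSp : Sparse k l E) :
    ∀ t : ℕ, ∀ (D : Multiset (Finset V × V)) (peb : V → ℕ), PebbleReach k l D peb →
    ∀ (e : Finset V) (G : Multiset (Finset V)), E = D.map Prod.fst + (e ::ₘ G) →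
    l + 1 ≤ (∑ u ∈ e, peb u) + t →
    ∃ (D' : Multiset (Finset V × V)) (peb' : V → ℕ),
      PebbleReach k l D' peb' ∧ D'.map Prod.fst = D.map Prod.fst ∧
      l + 1 ≤ ∑ u ∈ e, peb' u := by
  intro t
  induction t with
  | zero =>
    intro D peb hreach e G hE hle
    exact ⟨D, peb, hreach, rfl, by omega⟩
  | succ t IH =>
    intro D peb hreach e G hE hle
    by_cases hdone : l + 1 ≤ ∑ u ∈ e, peb u
    · exact ⟨D, peb, hreach, rfl, hdone⟩
    push_neg at hdone
    set R := RSet D e with hR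
    have heR : e ⊆ R := subset_RSet
    have h1 := sum_peb hreach R
    have h2 : Multiset.countP (fun p => p.2 ∈ R) D
        = Multiset.countP (fun p => p.1 ⊆ R) D :=
      countP_congr_mem (fun p hp =>
        ⟨fun h => RSet_closed hp h, fun h => h (tail_mem hreach p hp)⟩)
    have hspan : Multiset.countP (fun p => p.1 ⊆ R) D + 1 ≤ spanCount E R := by
      have hc : spanCount E R = Multiset.countP (fun x => x ⊆ R) E :=
        (Multiset.countP_eq_card_filter _ _).symm
      have hmap : Multiset.countP (fun x => x ⊆ R) (D.map Prod.fst)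
          = Multiset.countP (fun p : Finset V × V => p.1 ⊆ R) D := by
        rw [Multiset.countP_map, ← Multiset.countP_eq_card_filter]
      rw [hc, hE, Multiset.countP_add, Multiset.countP_cons, if_pos heR, hmap]
      omega
    have hSpR := hSp R (by omega)
    have hsumR : l + 1 ≤ ∑ u ∈ R, peb u := by
      set K := k * R.card with hK
      omega
    have hsplit := Finset.sum_sdiff (f := peb) heR
    have hpos : 0 < ∑ u ∈ R \ e, peb u := by omega
    obtain ⟨v, hvRe, hpv⟩ : ∃ v ∈ R \ e, 1 ≤ peb v := by
      by_contra hcon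
      push_neg at hcon
      have hz : ∑ u ∈ R \ e, peb u = 0 :=
        Finset.sum_eq_zero (fun u hu => by have := hcon u hu; omega)
      omega
    have hvR : v ∈ R := (Finset.mem_sdiff.1 hvRe).1
    have hve : v ∉ e := (Finset.mem_sdiff.1 hvRe).2
    obtain ⟨n, hn⟩ := RSet_reach hvR
    obtain ⟨D1, peb1, hr1, hf1, hs1⟩ := gather1 n D peb hreach e v hn hve hpv
    obtain ⟨D', peb', hr', hf', hfin⟩ :=
      IH D1 peb1 hr1 e G (by rw [hf1]; exact hE) (by omega)
    exact ⟨D', peb', hr', by rw [hf', hf1], hfin⟩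

end PebbleAux

/-- Main theorem: a hypergraph is `(k,ℓ)`-sparse iff it has a `(k,ℓ)`-pebble game
construction, i.e. some reachable configuration has underlying edge multiset `E`. -/
theorem stmt_17 {V : Type*} [DecidableEq V] (k l : ℕ) (hk : 1 ≤ k)
    (E : Multiset (Finset V)) (hne : ∀ e ∈ E, e.Nonempty) :
    Sparse k l E ↔
      ∃ (D : Multiset (Finset V × V)) (peb : V → ℕ),
        PebbleReach k l D peb ∧ D.map Prod.fst = E := by
  classical
  constructor
  · intro hSp
    have key : ∀ E' : Multiset (Finset V), E' ≤ E →
        ∃ (D : Multiset (Finset V × V)) (peb : V → ℕ),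
          PebbleReach k l D peb ∧ D.map Prod.fst = E' := by
      intro E'
      induction E' using Multiset.induction_on with
      | empty => intro _; exact ⟨0, fun _ => k, PebbleReach.init, rfl⟩
      | cons e F IHe =>
        intro hle
        obtain ⟨D, peb, hreach, hfst⟩ := IHe (le_trans (Multiset.le_cons_self F e) hle)
        obtain ⟨G, hG⟩ := Multiset.le_iff_exists_add.1 hle
        have hE : E = D.map Prod.fst + (e ::ₘ G) := by
          rw [hG, hfst, Multiset.cons_add, Multiset.add_cons]
        obtain ⟨D1, peb1, hr1, hf1, hsum⟩ :=
          PebbleAux.gatherMany E hSp (l + 1) D peb hreach e G hE (by omega)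
        have hene : e.Nonempty :=
          hne e (Multiset.mem_of_le hle (Multiset.mem_cons_self e F))
        obtain ⟨v, hv, hpv⟩ : ∃ v ∈ e, 1 ≤ peb1 v := by
          by_contra hcon
          push_neg at hcon
          have hz : ∑ u ∈ e, peb1 u = 0 :=
            Finset.sum_eq_zero (fun u hu => by have := hcon u hu; omega)
          omega
        refine ⟨(e, v) ::ₘ D1, _, PebbleReach.addEdge e v hr1 hene hv hsum hpv, ?_⟩
        rw [Multiset.map_cons, hf1, hfst]
    exact key E le_rfl
  · rintro ⟨D, peb, hreach, rfl⟩
    intro W hW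
    have hc : spanCount (D.map Prod.fst) W
        = Multiset.countP (fun p : Finset V × V => p.1 ⊆ W) D := by
      rw [spanCount, ← Multiset.countP_eq_card_filter, Multiset.countP_map,
        ← Multiset.countP_eq_card_filter]
    rw [hc] at hW ⊢
    exact PebbleAux.reach_sparse hreach W hW
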